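/- arXiv:2108.11241 — 2 statements merged into one kernel-verified Lean document; each statement's English description precedes it below -/
import Mathlib

section
/- Let A be a commutative ring. Then A is a GE₂-ring (i.e. GE₂(A) = GL₂(A)) if and only if the graph Γ(A) is connected. -/
open Matrix

/-- A row `(a,b) ∈ A²` is unimodular if `∃ r s, r*a + s*b = 1`. -/
def IsUnimod {A : Type*} [CommRing A] (v : Fin 2 → A) : Prop :=
  ∃ r s : A, r * v 0 + s * v 1 = 1

/-- Unimodular rows of length 2. -/
abbrev UnimodRow (A : Type*) [CommRing A] := {v : Fin 2 → A // IsUnimod v}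

/-- Two unimodular rows are equivalent if they differ by multiplication by a unit. -/
instance vertexSetoid (A : Type*) [CommRing A] : Setoid (UnimodRow A) where
  r v w := ∃ u : Aˣ, (u : A) • v.1 = w.1
  iseqv := by
    refine ⟨fun v => ⟨1, by simp⟩, ?_, ?_⟩
    · rintro v w ⟨u, h⟩
      exact ⟨u⁻¹, by rw [← h, smul_smul, Units.inv_mul, one_smul]⟩
    · rintro v w z ⟨u, h⟩ ⟨u', h'⟩
      exact ⟨u' * u, by rw [← h', ← h, smul_smul, ← Units.val_mul]⟩

/-- The vertices of the graph Γ(A): unimodular rows up to multiplication by a unit. -/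
def Vertex (A : Type*) [CommRing A] := Quotient (vertexSetoid A)

/-- The graph Γ(A). -/
def GammaGraph (A : Type*) [CommRing A] : SimpleGraph (Vertex A) where
  Adj x y := x ≠ y ∧ ∃ v w : UnimodRow A, x = ⟦v⟧ ∧ y = ⟦w⟧ ∧
    IsUnit (v.1 0 * w.1 1 - v.1 1 * w.1 0)
  symm := by
    constructor
    rintro x y ⟨hne, v, w, hx, hy, hd⟩
    refine ⟨hne.symm, w, v, hy, hx, ?_⟩
    have h : w.1 0 * v.1 1 - w.1 1 * v.1 0 = -(v.1 0 * w.1 1 - v.1 1 * w.1 0) := by ring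
    rw [h]
    exact hd.neg
  loopless := ⟨fun x h => h.1 rfl⟩

theorem isUnimod_vecMul {A : Type*} [CommRing A] {v : Fin 2 → A} (h : IsUnimod v)
    (M : GL (Fin 2) A) : IsUnimod (vecMul v (M : Matrix (Fin 2) (Fin 2) A)) := by
  obtain ⟨r, s, hrs⟩ := h
  set w : Fin 2 → A := ((M⁻¹ : GL (Fin 2) A) : Matrix (Fin 2) (Fin 2) A) *ᵥ ![r, s] with hw
  refine ⟨w 0, w 1, ?_⟩
  have h1 : vecMul v (M : Matrix (Fin 2) (Fin 2) A) ⬝ᵥ w = v ⬝ᵥ ![r, s] := by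
    rw [hw, ← dotProduct_mulVec, mulVec_mulVec, Units.mul_inv, one_mulVec]
  simp only [dotProduct, Fin.sum_univ_two] at h1
  simp only [Matrix.cons_val_zero, Matrix.cons_val_one, Matrix.head_cons] at h1
  linear_combination h1 + hrs

/-- The right action of GL₂(A) on the vertices of Γ(A). -/
def vertexMul {A : Type*} [CommRing A] (x : Vertex A) (M : GL (Fin 2) A) : Vertex A :=
  Quotient.map (fun v => ⟨vecMul v.1 (M : Matrix (Fin 2) (Fin 2) A), isUnimod_vecMul v.2 M⟩)
    (by
      rintro v w ⟨u, h⟩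
      refine ⟨u, ?_⟩
      show (u : A) • (vecMul v.1 (M : Matrix (Fin 2) (Fin 2) A)) =
        vecMul w.1 (M : Matrix (Fin 2) (Fin 2) A)
      rw [← h, Matrix.smul_vecMul]) x

/-- The vertex ∞ = [(1,0)]. -/
def vInf (A : Type*) [CommRing A] : Vertex A := ⟦⟨![1, 0], ⟨1, 0, by norm_num⟩⟩⟧

/-- The vertex 0 = [(0,1)]. -/
def vZero (A : Type*) [CommRing A] : Vertex A := ⟦⟨![0, 1], ⟨0, 1, by norm_num⟩⟩⟧

/-- The vertex 1 = [(1,1)]. -/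
def vOne (A : Type*) [CommRing A] : Vertex A := ⟦⟨![1, 1], ⟨1, 0, by norm_num⟩⟩⟧
open Matrix

/-- E(a) = [[a,1],[-1,0]] as an element of GL₂. -/
def Egl {A : Type*} [CommRing A] (a : A) : GL (Fin 2) A :=
  ⟨!![a, 1; -1, 0], !![0, -1; 1, a],
    by ext i j; fin_cases i <;> fin_cases j <;> simp [Matrix.mul_apply, Fin.sum_univ_two],
    by ext i j; fin_cases i <;> fin_cases j <;> simp [Matrix.mul_apply, Fin.sum_univ_two]⟩

/-- S(a) = [[a,1],[1,0]] as an element of GL₂. -/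
def Sgl {A : Type*} [CommRing A] (a : A) : GL (Fin 2) A :=
  ⟨!![a, 1; 1, 0], !![0, 1; 1, -a],
    by ext i j; fin_cases i <;> fin_cases j <;> simp [Matrix.mul_apply, Fin.sum_univ_two],
    by ext i j; fin_cases i <;> fin_cases j <;> simp [Matrix.mul_apply, Fin.sum_univ_two]⟩

/-- The elementary matrix E₁₂(a) = [[1,a],[0,1]] in GL₂. -/
def E12gl {A : Type*} [CommRing A] (a : A) : GL (Fin 2) A :=
  ⟨!![1, a; 0, 1], !![1, -a; 0, 1],
    by ext i j; fin_cases i <;> fin_cases j <;> simp [Matrix.mul_apply, Fin.sum_univ_two],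
    by ext i j; fin_cases i <;> fin_cases j <;> simp [Matrix.mul_apply, Fin.sum_univ_two]⟩

/-- The elementary matrix E₂₁(a) = [[1,0],[a,1]] in GL₂. -/
def E21gl {A : Type*} [CommRing A] (a : A) : GL (Fin 2) A :=
  ⟨!![1, 0; a, 1], !![1, 0; -a, 1],
    by ext i j; fin_cases i <;> fin_cases j <;> simp [Matrix.mul_apply, Fin.sum_univ_two],
    by ext i j; fin_cases i <;> fin_cases j <;> simp [Matrix.mul_apply, Fin.sum_univ_two]⟩

/-- GE₂(A): the subgroup of GL₂(A) generated by the elementary matrices and the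
invertible diagonal matrices. -/
def GE2 (A : Type*) [CommRing A] : Subgroup (GL (Fin 2) A) :=
  Subgroup.closure
    ({M | ∃ a : A, M = E12gl a} ∪ {M | ∃ a : A, M = E21gl a} ∪
      {M | (M : Matrix (Fin 2) (Fin 2) A) 0 1 = 0 ∧ (M : Matrix (Fin 2) (Fin 2) A) 1 0 = 0})

/-- Given `f : A → G` and a tuple `(a 0, …, a (n-1))`, the product
`f (a (n-1)) * ⋯ * f (a 1) * f (a 0)` (rightmost factor first). -/
def wordProd {A : Type*} {G : Type*} [Monoid G] (f : A → G) :
    {n : ℕ} → (Fin n → A) → G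
  | 0, _ => 1
  | n + 1, a => f (a (Fin.last n)) * wordProd f (fun j : Fin n => a j.castSucc)

section Stmt7Aux
open Matrix
variable {A : Type*} [CommRing A]

lemma funext_fin2 {f g : Fin 2 → A} (h0 : f 0 = g 0) (h1 : f 1 = g 1) : f = g := by
  funext j
  fin_cases j
  · exact h0
  · exact h1

lemma mk_eq_mk' {v w : UnimodRow A} (h : v.1 = w.1) : (⟦v⟧ : Vertex A) = ⟦w⟧ := by
  congr 1
  exact Subtype.ext h

lemma vertexMul_mk' (v : UnimodRow A) (M : GL (Fin 2) A) :
    vertexMul (⟦v⟧ : Vertex A) M = ⟦⟨vecMul v.1 M.val, isUnimod_vecMul v.2 M⟩⟧ := rfl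

lemma vertexMul_mul' (x : Vertex A) (M N : GL (Fin 2) A) :
    vertexMul (vertexMul x M) N = vertexMul x (M * N) := by
  induction x using Quotient.inductionOn with
  | h v =>
    rw [vertexMul_mk', vertexMul_mk', vertexMul_mk']
    refine mk_eq_mk' ?_
    show vecMul (vecMul v.1 M.val) N.val = vecMul v.1 (M * N).val
    rw [Matrix.vecMul_vecMul, Units.val_mul]

lemma vertexMul_one' (x : Vertex A) : vertexMul x 1 = x := by
  induction x using Quotient.inductionOn with
  | h v =>
    rw [vertexMul_mk']
    refine mk_eq_mk' ?_
    show vecMul v.1 ((1 : GL (Fin 2) A)).val = v.1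
    rw [Units.val_one, Matrix.vecMul_one]

lemma vecMul_apply' (v : Fin 2 → A) (P : Matrix (Fin 2) (Fin 2) A) (j : Fin 2) :
    vecMul v P j = v 0 * P 0 j + v 1 * P 1 j := by
  simp [Matrix.vecMul, dotProduct, Fin.sum_univ_two]

lemma vecMul_e0 (P : Matrix (Fin 2) (Fin 2) A) :
    vecMul ![(1 : A), 0] P = ![P 0 0, P 0 1] := by
  refine funext_fin2 ?_ ?_ <;> rw [vecMul_apply'] <;> simp

lemma isUnit_det2 (M : GL (Fin 2) A) :
    IsUnit (M.val 0 0 * M.val 1 1 - M.val 0 1 * M.val 1 0) := by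
  have h1 : M.val * ((M⁻¹ : GL (Fin 2) A) : Matrix (Fin 2) (Fin 2) A) = 1 := Units.mul_inv M
  have h2 := congrArg Matrix.det h1
  rw [Matrix.det_mul, Matrix.det_one, Matrix.det_fin_two] at h2
  exact ⟨⟨_, _, h2, by rw [mul_comm]; exact h2⟩, rfl⟩

lemma adj_mk' {v w : UnimodRow A} (hne : (⟦v⟧ : Vertex A) ≠ ⟦w⟧)
    (h : IsUnit (v.1 0 * w.1 1 - v.1 1 * w.1 0)) : (GammaGraph A).Adj ⟦v⟧ ⟦w⟧ := by
  unfold GammaGraph; exact ⟨hne, v, w, rfl, rfl, h⟩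

lemma reachable_mk' {v w : UnimodRow A}
    (h : IsUnit (v.1 0 * w.1 1 - v.1 1 * w.1 0)) :
    (GammaGraph A).Reachable ⟦v⟧ ⟦w⟧ := by
  by_cases he : (⟦v⟧ : Vertex A) = ⟦w⟧
  · rw [he]; exact SimpleGraph.Reachable.refl _
  · exact (adj_mk' he h).reachable

lemma reachable_mk2 {f g : Fin 2 → A} (hf : IsUnimod f) (hg : IsUnimod g)
    (h : IsUnit (f 0 * g 1 - f 1 * g 0)) :
    (GammaGraph A).Reachable (⟦⟨f, hf⟩⟧ : Vertex A) ⟦⟨g, hg⟩⟧ :=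
  reachable_mk' h

lemma vertexMul_injective' (M : GL (Fin 2) A) {x y : Vertex A}
    (h : vertexMul x M = vertexMul y M) : x = y := by
  have h2 := congrArg (fun z => vertexMul z M⁻¹) h
  simpa [vertexMul_mul', vertexMul_one', mul_inv_cancel] using h2

/-- Right multiplication by a matrix in `GL₂` as a graph homomorphism. -/
def mulGHom (M : GL (Fin 2) A) : GammaGraph A →g GammaGraph A where
  toFun x := vertexMul x M
  map_rel' := by
    intro x y h
    unfold GammaGraph at h
    obtain ⟨hne, v, w, hx, hy, hu⟩ := h
    subst hx; subst hy
    show (GammaGraph A).Adj (vertexMul ⟦v⟧ M) (vertexMul ⟦w⟧ M)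
    rw [vertexMul_mk', vertexMul_mk']
    refine adj_mk' ?_ ?_
    · intro hq
      exact hne (vertexMul_injective' M
        (by rw [vertexMul_mk', vertexMul_mk']; exact hq))
    · show IsUnit (vecMul v.1 M.val 0 * vecMul w.1 M.val 1
        - vecMul v.1 M.val 1 * vecMul w.1 M.val 0)
      have key : vecMul v.1 M.val 0 * vecMul w.1 M.val 1
          - vecMul v.1 M.val 1 * vecMul w.1 M.val 0
          = (v.1 0 * w.1 1 - v.1 1 * w.1 0)
            * (M.val 0 0 * M.val 1 1 - M.val 0 1 * M.val 1 0) := by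
        simp only [vecMul_apply']; ring
      rw [key]
      exact hu.mul (isUnit_det2 M)

lemma mulGHom_apply (M : GL (Fin 2) A) (x : Vertex A) : mulGHom M x = vertexMul x M := rfl

lemma E12_mem (a : A) : E12gl a ∈ GE2 A :=
  Subgroup.subset_closure (Or.inl (Or.inl ⟨a, rfl⟩))

lemma E21_mem (a : A) : E21gl a ∈ GE2 A :=
  Subgroup.subset_closure (Or.inl (Or.inr ⟨a, rfl⟩))

lemma diag_mem' {M : GL (Fin 2) A} (h1 : M.val 0 1 = 0) (h2 : M.val 1 0 = 0) :
    M ∈ GE2 A :=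
  Subgroup.subset_closure (Or.inr ⟨h1, h2⟩)

/-- The diagonal matrix `diag(u, w)` as an element of GL₂. -/
def diagGL (u w : Aˣ) : GL (Fin 2) A :=
  ⟨!![(u : A), 0; 0, (w : A)], !![((u⁻¹ : Aˣ) : A), 0; 0, ((w⁻¹ : Aˣ) : A)],
    by rw [Matrix.mul_fin_two, Matrix.one_fin_two]; simp,
    by rw [Matrix.mul_fin_two, Matrix.one_fin_two]; simp⟩

lemma diagGL_val (u w : Aˣ) :
    (diagGL u w : GL (Fin 2) A).val = !![(u : A), 0; 0, (w : A)] := rfl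

lemma diagGL_mem (u w : Aˣ) : diagGL u w ∈ GE2 A := by
  refine diag_mem' ?_ ?_ <;> rfl

lemma lower_mem {T : GL (Fin 2) A} (h0 : T.val 0 0 = 1) (h1 : T.val 0 1 = 0) :
    T ∈ GE2 A := by
  have key : T = E21gl (T.val 1 0) * ((E21gl (T.val 1 0))⁻¹ * T) := by group
  have hinv : ((E21gl (T.val 1 0))⁻¹ : GL (Fin 2) A).val = !![1, 0; -(T.val 1 0), 1] := rfl
  rw [key]
  refine Subgroup.mul_mem _ (E21_mem _) (diag_mem' ?_ ?_)
  · rw [Units.val_mul, hinv, Matrix.mul_apply, Fin.sum_univ_two]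
    simp [h1]
  · rw [Units.val_mul, hinv, Matrix.mul_apply, Fin.sum_univ_two]
    simp [h0]

lemma row_eq_mem {N M : GL (Fin 2) A} (hM : M ∈ GE2 A)
    (h : ∀ j, N.val 0 j = M.val 0 j) : N ∈ GE2 A := by
  have key : N = (N * M⁻¹) * M := by group
  have hprod : M.val * ((M⁻¹ : GL (Fin 2) A) : Matrix (Fin 2) (Fin 2) A) = 1 :=
    Units.mul_inv M
  have e0 := congrFun (congrFun hprod 0) 0
  have e1 := congrFun (congrFun hprod 0) 1
  rw [Matrix.mul_apply, Fin.sum_univ_two] at e0 e1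
  rw [Matrix.one_apply_eq] at e0
  rw [Matrix.one_apply_ne (by decide : (0 : Fin 2) ≠ 1)] at e1
  rw [key]
  refine Subgroup.mul_mem _ (lower_mem ?_ ?_) hM
  · rw [Units.val_mul, Matrix.mul_apply, Fin.sum_univ_two, h 0, h 1]
    exact e0
  · rw [Units.val_mul, Matrix.mul_apply, Fin.sum_univ_two, h 0, h 1]
    exact e1

lemma Sgl0_mem : Sgl (0 : A) ∈ GE2 A := by
  have key : Sgl (0 : A) = E12gl 1 * E21gl (-1) * E12gl 1 * diagGL (-1) 1 := by
    apply Units.ext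
    rw [Units.val_mul, Units.val_mul, Units.val_mul]
    show (!![(0 : A), 1; 1, 0]) =
      !![(1 : A), 1; 0, 1] * !![1, 0; -1, 1] * !![1, 1; 0, 1] * !![((-1 : Aˣ) : A), 0; 0, ((1 : Aˣ) : A)]
    norm_num [Matrix.mul_fin_two]
  rw [key]
  exact Subgroup.mul_mem _
    (Subgroup.mul_mem _ (Subgroup.mul_mem _ (E12_mem 1) (E21_mem (-1))) (E12_mem 1))
    (diagGL_mem (-1) 1)

lemma reachable_vInf_vertexMul {M : GL (Fin 2) A} (hM : M ∈ GE2 A) :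
    (GammaGraph A).Reachable (vInf A) (vertexMul (vInf A) M) := by
  induction hM using Subgroup.closure_induction with
  | mem g hg =>
    rcases hg with (⟨a, rfl⟩ | ⟨a, rfl⟩) | ⟨h1, h2⟩
    · -- E₁₂(a) : vInf ⬝ E₁₂(a) = [(1,a)], go through vZero = [(0,1)]
      rw [vInf, vertexMul_mk']
      have hrow : vecMul ![(1 : A), 0] (E12gl a).val = ![1, a] := by
        rw [vecMul_e0]
        rfl
      have h1 : (GammaGraph A).Reachable
          (⟦⟨![(1 : A), 0], ⟨1, 0, by norm_num⟩⟩⟧ : Vertex A)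
          ⟦⟨![(0 : A), 1], ⟨0, 1, by norm_num⟩⟩⟧ := by
        apply reachable_mk2
        show IsUnit ((1 : A) * 1 - 0 * 0)
        simp
      have h2 : (GammaGraph A).Reachable
          (⟦⟨![(0 : A), 1], ⟨0, 1, by norm_num⟩⟩⟧ : Vertex A)
          ⟦⟨vecMul ![(1 : A), 0] (E12gl a).val,
            isUnimod_vecMul ⟨1, 0, by norm_num⟩ (E12gl a)⟩⟧ := by
        apply reachable_mk2
        show IsUnit ((0 : A) * vecMul ![(1 : A), 0] (E12gl a).val 1
          - 1 * vecMul ![(1 : A), 0] (E12gl a).val 0)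
        rw [hrow]
        show IsUnit ((0 : A) * a - 1 * 1)
        simpa using (isUnit_one (M := A)).neg
      exact h1.trans h2
    · -- E₂₁(a) fixes vInf
      have h2 : vertexMul (vInf A) (E21gl a) = vInf A := by
        rw [vInf, vertexMul_mk']
        refine mk_eq_mk' ?_
        show vecMul ![(1 : A), 0] (E21gl a).val = ![1, 0]
        rw [vecMul_e0]
        rfl
      rw [h2]
    · -- diagonal matrices fix vInf
      have hu : IsUnit (g.val 0 0) := by
        have h3 := isUnit_det2 g
        rw [h1, h2] at h3
        rw [mul_zero, sub_zero] at h3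
        exact isUnit_of_mul_isUnit_left h3
      have h4 : vInf A = vertexMul (vInf A) g := by
        rw [vInf, vertexMul_mk']
        refine Quotient.sound ⟨hu.unit, ?_⟩
        show (hu.unit : A) • ![(1 : A), 0] = vecMul ![(1 : A), 0] g.val
        rw [vecMul_e0, IsUnit.unit_spec]
        refine funext_fin2 ?_ ?_
        · show g.val 0 0 * 1 = g.val 0 0
          rw [mul_one]
        · show g.val 0 0 * 0 = g.val 0 1
          rw [mul_zero, h1]
      rw [← h4]
  | one =>
    rw [vertexMul_one']
  | mul x y hx hy ihx ihy =>
    refine ihy.trans ?_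
    have h5 := ihx.map (mulGHom y)
    rw [mulGHom_apply, mulGHom_apply, vertexMul_mul'] at h5
    exact h5
  | inv x hx ihx =>
    have h5 := ihx.map (mulGHom x⁻¹)
    rw [mulGHom_apply, mulGHom_apply, vertexMul_mul', mul_inv_cancel,
      vertexMul_one'] at h5
    exact h5.symm

lemma step_lemma {x y : Vertex A} (hxy : (GammaGraph A).Adj x y) {M : GL (Fin 2) A}
    (hM : M ∈ GE2 A) (hx : x = vertexMul (vInf A) M) :
    ∃ N ∈ GE2 A, y = vertexMul (vInf A) N := by
  unfold GammaGraph at hxy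
  obtain ⟨hne, v, w, hxv, hyw, hu⟩ := hxy
  rw [hx, vInf, vertexMul_mk'] at hxv
  obtain ⟨u, hu1⟩ := Quotient.exact hxv
  have hu1' : (u : A) • vecMul ![(1 : A), 0] M.val = v.1 := hu1
  rw [vecMul_e0] at hu1'
  have hM'mem : diagGL u 1 * M ∈ GE2 A := Subgroup.mul_mem _ (diagGL_mem u 1) hM
  have hrow : ∀ j, v.1 j = (diagGL u 1 * M).val 0 j := by
    refine Fin.forall_fin_two.mpr ⟨?_, ?_⟩ <;>
      rw [← hu1', Units.val_mul, diagGL_val, Matrix.mul_apply, Fin.sum_univ_two] <;>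
      simp
  have hVu : IsUnit (!![v.1 0, v.1 1; w.1 0, w.1 1]) := by
    rw [Matrix.isUnit_iff_isUnit_det, Matrix.det_fin_two]
    simpa using hu
  obtain ⟨V, hV⟩ := hVu
  have hVmem : (V : GL (Fin 2) A) ∈ GE2 A := by
    refine row_eq_mem hM'mem (Fin.forall_fin_two.mpr ⟨?_, ?_⟩)
    · rw [hV]
      exact hrow 0
    · rw [hV]
      exact hrow 1
  refine ⟨Sgl 0 * V, Subgroup.mul_mem _ Sgl0_mem hVmem, ?_⟩
  rw [hyw, vInf, vertexMul_mk']
  refine mk_eq_mk' ?_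
  show w.1 = vecMul ![(1 : A), 0] ((Sgl 0 * V : GL (Fin 2) A)).val
  have hP : ((Sgl 0 * V : GL (Fin 2) A)).val
      = !![(0 : A), 1; 1, 0] * !![v.1 0, v.1 1; w.1 0, w.1 1] := by
    rw [Units.val_mul, hV]
    rfl
  rw [hP, Matrix.mul_fin_two, vecMul_e0]
  refine (funext_fin2 ?_ ?_).symm
  · show (0 : A) * v.1 0 + 1 * w.1 0 = w.1 0
    ring
  · show (0 : A) * v.1 1 + 1 * w.1 1 = w.1 1
    ring

lemma exists_of_walk {x y : Vertex A} (p : (GammaGraph A).Walk x y) :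
    ∀ {M : GL (Fin 2) A}, M ∈ GE2 A → x = vertexMul (vInf A) M →
      ∃ N ∈ GE2 A, y = vertexMul (vInf A) N := by
  induction p with
  | nil => exact fun hM hx => ⟨_, hM, hx⟩
  | cons h p ih =>
    intro M hM hx
    obtain ⟨N, hN, hy⟩ := step_lemma h hM hx
    exact ih hN hy

end Stmt7Aux

/-- The GL₂ element with rows `v` and `(-s, r)`, for a unimodularity witness `r,s`. -/
def rowGL {A : Type*} [CommRing A] (v : UnimodRow A) (r s : A)
    (hrs : r * v.1 0 + s * v.1 1 = 1) : GL (Fin 2) A :=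
  ⟨!![v.1 0, v.1 1; -s, r], !![r, -(v.1 1); s, v.1 0],
    by
      have e1 : v.1 0 * r + v.1 1 * s = 1 := by linear_combination hrs
      have e2 : v.1 0 * -(v.1 1) + v.1 1 * v.1 0 = 0 := by ring
      have e3 : -s * r + r * s = 0 := by ring
      have e4 : -s * -(v.1 1) + r * v.1 0 = 1 := by linear_combination hrs
      rw [Matrix.mul_fin_two, Matrix.one_fin_two, e1, e2, e3, e4],
    by
      have e1 : r * v.1 0 + -(v.1 1) * -s = 1 := by linear_combination hrs
      have e2 : r * v.1 1 + -(v.1 1) * r = 0 := by ring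
      have e3 : s * v.1 0 + v.1 0 * -s = 0 := by ring
      have e4 : s * v.1 1 + v.1 0 * r = 1 := by linear_combination hrs
      rw [Matrix.mul_fin_two, Matrix.one_fin_two, e1, e2, e3, e4]⟩

/-- A is a GE₂-ring iff the graph Γ(A) is connected. -/
theorem stmt7 (A : Type*) [CommRing A] :
    GE2 A = ⊤ ↔ (GammaGraph A).Connected := by
  constructor
  · intro h
    have key : ∀ z : Vertex A, (GammaGraph A).Reachable (vInf A) z := by
      intro z
      induction z using Quotient.inductionOn with
      | h v =>
        obtain ⟨r, s, hrs⟩ := v.2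
        have hMv : rowGL v r s hrs ∈ GE2 A := by rw [h]; trivial
        have hr := reachable_vInf_vertexMul hMv
        have he : vertexMul (vInf A) (rowGL v r s hrs) = ⟦v⟧ := by
          rw [vInf, vertexMul_mk']
          refine mk_eq_mk' ?_
          show vecMul ![(1 : A), 0] (rowGL v r s hrs).val = v.1
          rw [vecMul_e0]
          show ![v.1 0, v.1 1] = v.1
          exact funext_fin2 (f := ![v.1 0, v.1 1]) (g := v.1) rfl rfl
        rwa [he] at hr
    haveI : Nonempty (Vertex A) := ⟨vInf A⟩
    exact ⟨fun x y => (key x).symm.trans (key y)⟩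
  · intro h
    refine (Subgroup.eq_top_iff' (GE2 A)).mpr fun N => ?_
    have hvN : IsUnimod (vecMul ![(1 : A), 0] N.val) :=
      isUnimod_vecMul ⟨1, 0, by norm_num⟩ N
    have hreach : (GammaGraph A).Reachable (vInf A) ⟦(⟨_, hvN⟩ : UnimodRow A)⟧ :=
      h.preconnected _ _
    obtain ⟨p⟩ := hreach
    obtain ⟨M, hM, hy⟩ := exists_of_walk p (Subgroup.one_mem _) (vertexMul_one' _).symm
    rw [vInf, vertexMul_mk'] at hy
    obtain ⟨u, hu1⟩ := Quotient.exact hy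
    have hu1' : (u : A) • vecMul ![(1 : A), 0] N.val = vecMul ![(1 : A), 0] M.val := hu1
    rw [vecMul_e0, vecMul_e0] at hu1'
    have h0 : (u : A) * N.val 0 0 = M.val 0 0 := congrFun hu1' 0
    have h1 : (u : A) * N.val 0 1 = M.val 0 1 := congrFun hu1' 1
    have hmem : diagGL u 1 * N ∈ GE2 A := by
      refine row_eq_mem hM (Fin.forall_fin_two.mpr ⟨?_, ?_⟩)
      · rw [Units.val_mul, diagGL_val, Matrix.mul_apply, Fin.sum_univ_two]
        simpa using h0
      · rw [Units.val_mul, diagGL_val, Matrix.mul_apply, Fin.sum_univ_two]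
        simpa using h1
    have hN : N = (diagGL u 1)⁻¹ * (diagGL u 1 * N) := by group
    rw [hN]
    exact Subgroup.mul_mem _ (Subgroup.inv_mem _ (diagGL_mem u 1)) hmem
end

section
/- Let A be a commutative ring, a ∈ A, and β = β(u,b) ∈ 𝔹 ⊆ C(A) with unit u = u(β). Then ε(a·β) = h(u) ε(a) β in C(A), where a·β := au² + bu ∈ A. -/
open Matrix

/-- The word `h(u) = ε(-u)ε(-u⁻¹)ε(-u)` in the free group on the symbols `ε(a)`, `a ∈ A`. -/
def hFree {A : Type*} [CommRing A] (u : Aˣ) : FreeGroup A :=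
  FreeGroup.of (-(u : A)) * FreeGroup.of (-((u⁻¹ : Aˣ) : A)) * FreeGroup.of (-(u : A))

/-- The defining relations of Cohn's group C(A). -/
def CRels (A : Type*) [CommRing A] : Set (FreeGroup A) :=
  {x | ∃ u v : Aˣ, x = hFree u * hFree v * (hFree (u * v))⁻¹} ∪
  {x | ∃ a b : A, x = FreeGroup.of a * FreeGroup.of (0 : A) * FreeGroup.of b *
      (hFree (-1) * FreeGroup.of (a + b))⁻¹} ∪
  {x | ∃ (u : Aˣ) (a : A), x = hFree u * FreeGroup.of a * hFree u *
      (FreeGroup.of ((u : A) ^ 2 * a))⁻¹}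

/-- Cohn's group C(A), presented by generators ε(a), a ∈ A, and the three families of
relations h(u)h(v) = h(uv), ε(a)ε(0)ε(b) = h(-1)ε(a+b), h(u)ε(a)h(u) = ε(u²a). -/
abbrev CGroup (A : Type*) [CommRing A] := PresentedGroup (CRels A)

/-- The generator ε(a) of C(A). -/
def epsC {A : Type*} [CommRing A] (a : A) : CGroup A := PresentedGroup.of a

/-- h(u) = ε(-u)ε(-u⁻¹)ε(-u) in C(A). -/
def hC {A : Type*} [CommRing A] (u : Aˣ) : CGroup A :=
  epsC (-(u : A)) * epsC (-((u⁻¹ : Aˣ) : A)) * epsC (-(u : A))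

/-- y(a) = ε(0)³ε(a) in C(A). -/
def yC {A : Type*} [CommRing A] (a : A) : CGroup A := (epsC (0 : A)) ^ 3 * epsC a

/-- ȳ(a) = ε(-a)ε(0)³ in C(A). -/
def ybarC {A : Type*} [CommRing A] (a : A) : CGroup A := epsC (-a) * (epsC (0 : A)) ^ 3

/-- β(u,a) = h(u)y(ua) in C(A). -/
def betaC {A : Type*} [CommRing A] (u : Aˣ) (a : A) : CGroup A := hC u * yC ((u : A) * a)

/-- E(a) = [[a,1],[-1,0]] as an element of SL₂. -/
def ESL {A : Type*} [CommRing A] (a : A) : Matrix.SpecialLinearGroup (Fin 2) A :=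
  ⟨!![a, 1; -1, 0], by simp [Matrix.det_fin_two_of]⟩

/-- D(u) = diag(u, u⁻¹) as an element of SL₂. -/
def DSL {A : Type*} [CommRing A] (u : Aˣ) : Matrix.SpecialLinearGroup (Fin 2) A :=
  ⟨!![(u : A), 0; 0, ((u⁻¹ : Aˣ) : A)], by simp [Matrix.det_fin_two_of]⟩

theorem ESL_h {A : Type*} [CommRing A] (u : Aˣ) :
    ESL (-(u : A)) * ESL (-((u⁻¹ : Aˣ) : A)) * ESL (-(u : A)) = DSL u := by
  apply Subtype.ext
  show (!![-(u:A), 1; -1, 0] * !![-((u⁻¹:Aˣ):A), 1; -1, 0]) * !![-(u:A), 1; -1, 0] = _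
  ext i j
  fin_cases i <;> fin_cases j <;>
    simp [DSL, Matrix.mul_apply, Fin.sum_univ_two]

theorem DSL_mul {A : Type*} [CommRing A] (u v : Aˣ) : DSL u * DSL v = DSL (u * v) := by
  apply Subtype.ext
  show (!![(u:A), 0; 0, ((u⁻¹:Aˣ):A)] * !![(v:A), 0; 0, ((v⁻¹:Aˣ):A)]) = _
  ext i j
  fin_cases i <;> fin_cases j <;>
    simp [DSL, Matrix.mul_apply, Fin.sum_univ_two, mul_comm]

theorem ESL_rel2 {A : Type*} [CommRing A] (a b : A) :
    ESL a * ESL (0 : A) * ESL b = DSL (-1) * ESL (a + b) := by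
  apply Subtype.ext
  show (!![a, 1; -1, 0] * !![(0:A), 1; -1, 0]) * !![b, 1; -1, 0] = _
  change _ = (DSL (-1 : Aˣ)).1 * (ESL (a + b)).1
  ext i j
  fin_cases i <;> fin_cases j <;>
    simp [DSL, ESL, Matrix.mul_apply, Fin.sum_univ_two]

theorem ESL_rel3 {A : Type*} [CommRing A] (u : Aˣ) (a : A) :
    DSL u * ESL a * DSL u = ESL ((u : A) ^ 2 * a) := by
  apply Subtype.ext
  show (!![(u:A), 0; 0, ((u⁻¹:Aˣ):A)] * !![a, 1; -1, 0]) * !![(u:A), 0; 0, ((u⁻¹:Aˣ):A)] = _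
  ext i j
  fin_cases i <;> fin_cases j <;>
    simp [ESL, Matrix.mul_apply, Fin.sum_univ_two] <;> ring

theorem lift_hFree {A : Type*} [CommRing A] (u : Aˣ) :
    FreeGroup.lift (fun a : A => ESL a) (hFree u) = DSL u := by
  simp only [hFree, _root_.map_mul, FreeGroup.lift_apply_of]
  exact ESL_h u

theorem CRels_liftable {A : Type*} [CommRing A] :
    ∀ r ∈ CRels A, FreeGroup.lift (fun a : A => ESL a) r = 1 := by
  rintro r ((⟨u, v, rfl⟩ | ⟨a, b, rfl⟩) | ⟨u, a, rfl⟩)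
  · rw [_root_.map_mul, _root_.map_mul, map_inv, lift_hFree, lift_hFree, lift_hFree, DSL_mul,
      mul_inv_cancel]
  · simp only [_root_.map_mul, map_inv, FreeGroup.lift_apply_of, lift_hFree]
    rw [ESL_rel2, mul_inv_cancel]
  · simp only [_root_.map_mul, map_inv, FreeGroup.lift_apply_of, lift_hFree]
    rw [ESL_rel3, mul_inv_cancel]

/-- The homomorphism ψ : C(A) → SL₂(A) with ψ(ε(a)) = E(a). -/
def psiC (A : Type*) [CommRing A] : CGroup A →* Matrix.SpecialLinearGroup (Fin 2) A :=
  PresentedGroup.toGroup CRels_liftable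

@[simp] theorem psiC_epsC {A : Type*} [CommRing A] (a : A) : psiC A (epsC a) = ESL a :=
  PresentedGroup.toGroup.of _

theorem mk_rel {A : Type*} [CommRing A] {r : FreeGroup A} (h : r ∈ CRels A) :
    PresentedGroup.mk (CRels A) r = 1 :=
  (QuotientGroup.eq_one_iff _).2 (Subgroup.subset_normalClosure h)

theorem mk_hFree {A : Type*} [CommRing A] (u : Aˣ) :
    PresentedGroup.mk (CRels A) (hFree u) = hC u := by
  simp only [hFree, _root_.map_mul]; rfl

theorem hC_mul {A : Type*} [CommRing A] (u v : Aˣ) : hC u * hC v = hC (u * v) := by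
  have := mk_rel (A := A) (Or.inl (Or.inl ⟨u, v, rfl⟩))
  simp only [_root_.map_mul, map_inv, mk_hFree] at this
  exact mul_inv_eq_one.mp this

theorem C_rel2 {A : Type*} [CommRing A] (a b : A) :
    epsC a * epsC (0 : A) * epsC b = hC (-1) * epsC (a + b) := by
  have := mk_rel (A := A) (Or.inl (Or.inr ⟨a, b, rfl⟩))
  simp only [_root_.map_mul, map_inv, mk_hFree] at this
  exact mul_inv_eq_one.mp this

theorem C_rel3 {A : Type*} [CommRing A] (u : Aˣ) (a : A) :
    hC u * epsC a * hC u = epsC ((u : A) ^ 2 * a) := by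
  have := mk_rel (A := A) (Or.inr ⟨u, a, rfl⟩)
  simp only [_root_.map_mul, map_inv, mk_hFree] at this
  exact mul_inv_eq_one.mp this

theorem hC_one {A : Type*} [CommRing A] : hC (1 : Aˣ) = 1 := by
  have := hC_mul (1 : Aˣ) 1
  rw [mul_one] at this
  exact mul_right_cancel (by rw [this, one_mul])

theorem hC_neg_one_sq {A : Type*} [CommRing A] : hC (-1 : Aˣ) * hC (-1 : Aˣ) = 1 := by
  rw [hC_mul]; norm_num [hC_one]

theorem eps_cube {A : Type*} [CommRing A] (c d : A) :
    epsC c * (epsC (0 : A)) ^ 3 * epsC d = epsC (c + d) := by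
  have h1 : epsC c * epsC (0 : A) * epsC (0 : A) = hC (-1) * epsC c := by
    rw [C_rel2, add_zero]
  calc epsC c * (epsC (0 : A)) ^ 3 * epsC d
      = (epsC c * epsC (0 : A) * epsC (0 : A)) * (epsC (0 : A) * epsC d) := by
        rw [pow_succ, pow_two]; group
    _ = hC (-1) * (epsC c * epsC (0 : A) * epsC d) := by rw [h1]; group
    _ = hC (-1) * (hC (-1) * epsC (c + d)) := by rw [C_rel2]
    _ = epsC (c + d) := by rw [← mul_assoc, hC_neg_one_sq, one_mul]

/-- For a ∈ A and β = β(u,b) ∈ 𝔹 ⊆ C(A):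
ε(a·β) = h(u) ε(a) β, where a·β = au² + bu. -/
theorem stmt13 (A : Type*) [CommRing A] (a b : A) (u : Aˣ) :
    epsC (a * (u : A) ^ 2 + b * (u : A)) = hC u * epsC a * betaC u b := by
  have : hC u * epsC a * betaC u b
      = (hC u * epsC a * hC u) * ((epsC (0 : A)) ^ 3 * epsC ((u : A) * b)) := by
    rw [betaC, yC]; group
  rw [this, C_rel3, ← mul_assoc, eps_cube]
  ring_nf
end
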